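/- arXiv:2408.07634 — 2 statements merged into one kernel-verified Lean document; each statement's English description precedes it below -/
import Mathlib

section
/- lim_{d→1^-} (1-d)/2^{1-d} · ∑_{k=1}^∞ (k^d - (k-1)^d)/k = 1. -/
open Filter Set Real Finset Topology

/-- MVT for rpow on `[a, a+1]`. -/
private lemma rpow_mvt1 (p : ℝ) {a : ℝ} (ha : 0 < a) :
    ∃ c, a ≤ c ∧ c ≤ a + 1 ∧ 0 < c ∧ (a + 1) ^ p - a ^ p = p * c ^ (p - 1) := by
  have hab : a < a + 1 := by linarith
  have hcont : ContinuousOn (fun x : ℝ => x ^ p) (Icc a (a + 1)) :=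
    ContinuousOn.rpow_const continuousOn_id fun x hx =>
      Or.inl (ne_of_gt (lt_of_lt_of_le ha hx.1))
  have hderiv : ∀ x ∈ Ioo a (a + 1), HasDerivAt (fun x : ℝ => x ^ p) (p * x ^ (p - 1)) x :=
    fun x hx => Real.hasDerivAt_rpow_const (Or.inl (ne_of_gt (ha.trans hx.1)))
  obtain ⟨c, hc, heq⟩ := exists_hasDerivAt_eq_slope (fun x : ℝ => x ^ p)
    (fun x => p * x ^ (p - 1)) hab hcont hderiv
  refine ⟨c, hc.1.le, hc.2.le, ha.trans hc.1, ?_⟩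
  have : (a + 1) - a = 1 := by ring
  rw [this, div_one] at heq
  exact heq.symm

/-- `(a+1)^d - a^d ≤ d * a^(d-1)` for `0 < d < 1`, `0 < a`. -/
private lemma diff_le {d a : ℝ} (hd0 : 0 < d) (hd1 : d < 1) (ha : 0 < a) :
    (a + 1) ^ d - a ^ d ≤ d * a ^ (d - 1) := by
  obtain ⟨c, h1, _, _, he⟩ := rpow_mvt1 d ha
  have hc : c ^ (d - 1) ≤ a ^ (d - 1) := by
    rcases eq_or_lt_of_le h1 with h | h
    · rw [h]
    · exact Real.rpow_le_rpow_of_nonpos ha h1 (by linarith)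
  rw [he]
  exact mul_le_mul_of_nonneg_left hc hd0.le

/-- `d * (a+1)^(d-1) ≤ (a+1)^d - a^d` for `0 < d < 1`, `0 < a`. -/
private lemma le_diff {d a : ℝ} (hd0 : 0 < d) (hd1 : d < 1) (ha : 0 < a) :
    d * (a + 1) ^ (d - 1) ≤ (a + 1) ^ d - a ^ d := by
  obtain ⟨c, _, h2, hcpos, he⟩ := rpow_mvt1 d ha
  have hc : (a + 1) ^ (d - 1) ≤ c ^ (d - 1) :=
    Real.rpow_le_rpow_of_nonpos hcpos h2 (by linarith)
  rw [he]
  exact mul_le_mul_of_nonneg_left hc hd0.le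

/-- `a^(d-1) - (a+1)^(d-1) ≤ (1-d) * a^(d-2)` for `0 < d < 1`, `0 < a`. -/
private lemma tele_le {d a : ℝ} (hd1 : d < 1) (ha : 0 < a) :
    a ^ (d - 1) - (a + 1) ^ (d - 1) ≤ (1 - d) * a ^ (d - 2) := by
  obtain ⟨c, h1, _, hcpos, he⟩ := rpow_mvt1 (d - 1) ha
  have he' : a ^ (d - 1) - (a + 1) ^ (d - 1) = (1 - d) * c ^ (d - 1 - 1) := by
    rw [show a ^ (d-1) - (a+1)^(d-1) = -((a+1)^(d-1) - a^(d-1)) by ring, he]; ring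
  have hc : c ^ (d - 1 - 1) ≤ a ^ (d - 1 - 1) := by
    rcases eq_or_lt_of_le h1 with h | h
    · rw [h]
    · exact Real.rpow_le_rpow_of_nonpos ha h1 (by linarith)
  rw [he', show d - 1 - 1 = d - 2 by ring] at *
  exact mul_le_mul_of_nonneg_left hc (by linarith)

/-- `(1-d) * (a+1)^(d-2) ≤ a^(d-1) - (a+1)^(d-1)` for `0 < d < 1`, `0 < a`. -/
private lemma le_tele {d a : ℝ} (hd1 : d < 1) (ha : 0 < a) :
    (1 - d) * (a + 1) ^ (d - 2) ≤ a ^ (d - 1) - (a + 1) ^ (d - 1) := by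
  obtain ⟨c, _, h2, hcpos, he⟩ := rpow_mvt1 (d - 1) ha
  have he' : a ^ (d - 1) - (a + 1) ^ (d - 1) = (1 - d) * c ^ (d - 1 - 1) := by
    rw [show a ^ (d-1) - (a+1)^(d-1) = -((a+1)^(d-1) - a^(d-1)) by ring, he]; ring
  have hc : (a + 1) ^ (d - 1 - 1) ≤ c ^ (d - 1 - 1) :=
    Real.rpow_le_rpow_of_nonpos hcpos h2 (by linarith)
  rw [he', show d - 1 - 1 = d - 2 by ring] at *
  exact mul_le_mul_of_nonneg_left hc (by linarith)

private lemma key_bounds {d : ℝ} (hd0 : 0 < d) (hd1 : d < 1) :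
    d ≤ (1 - d) * ∑' k : ℕ, (((k : ℝ) + 1) ^ d - (k : ℝ) ^ d) / ((k : ℝ) + 1) ∧
    (1 - d) * (∑' k : ℕ, (((k : ℝ) + 1) ^ d - (k : ℝ) ^ d) / ((k : ℝ) + 1))
      ≤ 1 + d * (1 - d) := by
  set F : ℕ → ℝ := fun k => ((k : ℝ) + 1) ^ (d - 2) with hFdef
  set G : ℕ → ℝ := fun k => ((k : ℝ) + 1) ^ (d - 1) - ((k : ℝ) + 2) ^ (d - 1) with hGdef
  set T : ℕ → ℝ := fun k => (((k : ℝ) + 1) ^ d - (k : ℝ) ^ d) / ((k : ℝ) + 1) with hTdef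
  have hk1 : ∀ k : ℕ, (0:ℝ) < (k : ℝ) + 1 := fun k => by positivity
  have hFnn : ∀ k, 0 ≤ F k := fun k => Real.rpow_nonneg (hk1 k).le _
  -- summability of F
  have hF : Summable F := by
    have h0 : Summable (fun n : ℕ => (n : ℝ) ^ (d - 2)) :=
      Real.summable_nat_rpow.mpr (by linarith)
    have h1 := (summable_nat_add_iff (f := fun n : ℕ => (n : ℝ) ^ (d - 2)) 1).mpr h0
    refine h1.congr fun n => ?_
    push_cast
    rfl
  -- pointwise bound: T below
  have hTl : ∀ k : ℕ, d * F k ≤ T k := by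
    intro k
    have hpow : ((k:ℝ) + 1) ^ (d - 2) * ((k:ℝ) + 1) = ((k:ℝ) + 1) ^ (d - 1) := by
      rw [← Real.rpow_add_one (hk1 k).ne' (d - 2)]
      congr 1
      ring
    have hnum : d * ((k:ℝ) + 1) ^ (d - 1) ≤ ((k:ℝ) + 1) ^ d - (k:ℝ) ^ d := by
      rcases Nat.eq_zero_or_pos k with rfl | hk
      · simp only [Nat.cast_zero, zero_add]
        rw [Real.zero_rpow hd0.ne', Real.one_rpow, Real.one_rpow]
        linarith
      · exact le_diff hd0 hd1 (by exact_mod_cast hk)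
    show d * ((k:ℝ) + 1) ^ (d - 2) ≤ (((k:ℝ) + 1) ^ d - (k:ℝ) ^ d) / ((k:ℝ) + 1)
    rw [le_div_iff₀ (hk1 k)]
    calc d * ((k:ℝ)+1)^(d-2) * ((k:ℝ)+1) = d * (((k:ℝ)+1)^(d-2) * ((k:ℝ)+1)) := by ring
      _ = d * ((k:ℝ)+1)^(d-1) := by rw [hpow]
      _ ≤ _ := hnum
  -- pointwise bound: shifted T above
  have hTu : ∀ k : ℕ, T (k + 1) ≤ d * F k := by
    intro k
    have ha : (0:ℝ) < (k : ℝ) + 1 := hk1 k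
    have hb : (0:ℝ) < (k : ℝ) + 1 + 1 := by linarith
    have hpow : ((k:ℝ) + 1) ^ (d - 2) * ((k:ℝ) + 1) = ((k:ℝ) + 1) ^ (d - 1) := by
      rw [← Real.rpow_add_one ha.ne' (d - 2)]
      congr 1
      ring
    have h := diff_le (a := (k:ℝ) + 1) hd0 hd1 ha
    have hT : T (k + 1) = (((k:ℝ) + 1 + 1) ^ d - ((k:ℝ) + 1) ^ d) / ((k:ℝ) + 1 + 1) := by
      simp only [hTdef]
      push_cast
      ring_nf
    rw [hT, div_le_iff₀ hb]
    show _ ≤ d * ((k:ℝ) + 1) ^ (d - 2) * ((k:ℝ) + 1 + 1)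
    have hF' : (0:ℝ) ≤ ((k:ℝ)+1) ^ (d-2) := Real.rpow_nonneg ha.le _
    have hdF : (0:ℝ) ≤ d * ((k:ℝ)+1)^(d-2) := mul_nonneg hd0.le hF'
    calc ((k:ℝ)+1+1)^d - ((k:ℝ)+1)^d ≤ d * ((k:ℝ)+1)^(d-1) := h
      _ = d * ((k:ℝ)+1)^(d-2) * ((k:ℝ)+1) := by rw [← hpow]; ring
      _ ≤ d * ((k:ℝ)+1)^(d-2) * ((k:ℝ)+1+1) := by nlinarith
  -- pointwise bounds on G
  have hGu : ∀ k : ℕ, G k ≤ (1 - d) * F k := by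
    intro k
    have h := tele_le (a := (k:ℝ) + 1) hd1 (hk1 k)
    have e1 : (k:ℝ) + 1 + 1 = (k:ℝ) + 2 := by ring
    rw [e1] at h
    exact h
  have hGl : ∀ k : ℕ, (1 - d) * F (k + 1) ≤ G k := by
    intro k
    have h := le_tele (a := (k:ℝ) + 1) hd1 (hk1 k)
    have e1 : (k:ℝ) + 1 + 1 = (k:ℝ) + 2 := by ring
    rw [e1] at h
    have e2 : F (k + 1) = ((k:ℝ) + 2) ^ (d - 2) := by
      simp only [hFdef]
      push_cast
      ring_nf
    rw [e2]
    exact h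
  have hG0 : ∀ k, 0 ≤ G k := fun k =>
    le_trans (mul_nonneg (by linarith) (hFnn _)) (hGl k)
  have hGsum : Summable G := Summable.of_nonneg_of_le hG0 hGu (hF.mul_left (1 - d))
  have hTnn : ∀ k, 0 ≤ T k := by
    intro k
    apply div_nonneg _ (hk1 k).le
    exact sub_nonneg.mpr (Real.rpow_le_rpow (Nat.cast_nonneg k) (by linarith) hd0.le)
  have hTsum : Summable T := by
    refine (summable_nat_add_iff 1).mp ?_
    exact Summable.of_nonneg_of_le (fun k => hTnn _) hTu (hF.mul_left d)
  -- telescoping: tsum G = 1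
  have hGtsum : ∑' k, G k = 1 := by
    have hpart : ∀ n : ℕ, ∑ i ∈ Finset.range n, G i = 1 - ((n : ℝ) + 1) ^ (d - 1) := by
      intro n
      have : ∀ i : ℕ, G i = (fun j : ℕ => ((j : ℝ) + 1) ^ (d - 1)) i
          - (fun j : ℕ => ((j : ℝ) + 1) ^ (d - 1)) (i + 1) := by
        intro i; rw [hGdef]; push_cast; ring_nf
      rw [Finset.sum_congr rfl fun i _ => this i, Finset.sum_range_sub']
      norm_num
    have hlim : Tendsto (fun n : ℕ => ∑ i ∈ Finset.range n, G i) atTop (𝓝 1) := by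
      simp_rw [hpart]
      have h2 : Tendsto (fun x : ℝ => x ^ (-(1 - d))) atTop (𝓝 0) :=
        tendsto_rpow_neg_atTop (by linarith)
      have h3 : Tendsto (fun n : ℕ => (n : ℝ) + 1) atTop atTop :=
        tendsto_atTop_add_const_right atTop 1 tendsto_natCast_atTop_atTop
      have h4 := h2.comp h3
      simp only [neg_sub] at h4
      have := h4.const_sub 1
      simpa using this
    exact tendsto_nhds_unique hGsum.hasSum.tendsto_sum_nat hlim
  set A := ∑' k, F k with hA
  -- (1) 1 ≤ (1-d) * A
  have h1 : 1 ≤ (1 - d) * A := by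
    have := Summable.tsum_le_tsum hGu hGsum (hF.mul_left (1 - d))
    rwa [hGtsum, tsum_mul_left] at this
  -- (2) (1-d) * (A - 1) ≤ 1
  have h2 : (1 - d) * (A - 1) ≤ 1 := by
    have hshift : Summable fun k : ℕ => F (k + 1) := (summable_nat_add_iff 1).mpr hF
    have hle := Summable.tsum_le_tsum hGl (hshift.mul_left (1 - d)) hGsum
    rw [hGtsum, tsum_mul_left] at hle
    have hsplit : A = F 0 + ∑' k, F (k + 1) := Summable.tsum_eq_zero_add hF
    have hF0 : F 0 = 1 := by rw [hFdef]; norm_num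
    rw [hF0] at hsplit
    have : ∑' k, F (k + 1) = A - 1 := by linarith
    rwa [this] at hle
  set S := ∑' k, T k with hS
  -- (3) d * A ≤ S
  have h3 : d * A ≤ S := by
    have := Summable.tsum_le_tsum hTl (hF.mul_left d) hTsum
    rwa [tsum_mul_left] at this
  -- (4) S ≤ 1 + d * A
  have h4 : S ≤ 1 + d * A := by
    have hshiftT : Summable fun k : ℕ => T (k + 1) := (summable_nat_add_iff 1).mpr hTsum
    have hle := Summable.tsum_le_tsum hTu hshiftT (hF.mul_left d)
    rw [tsum_mul_left] at hle
    have hsplit : S = T 0 + ∑' k, T (k + 1) := Summable.tsum_eq_zero_add hTsum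
    have hT0 : T 0 = 1 := by
      simp only [hTdef, Nat.cast_zero, zero_add]
      rw [Real.zero_rpow hd0.ne', Real.one_rpow]
      norm_num
    rw [hT0] at hsplit
    linarith
  constructor
  · nlinarith [mul_le_mul_of_nonneg_left h3 (show (0:ℝ) ≤ 1 - d by linarith)]
  · nlinarith [mul_le_mul_of_nonneg_left h4 (show (0:ℝ) ≤ 1 - d by linarith)]

theorem limit_pd_eq_one :
    Filter.Tendsto
      (fun d : ℝ => (1 - d) / 2 ^ (1 - d) *
        ∑' k : ℕ, (((k : ℝ) + 1) ^ d - (k : ℝ) ^ d) / ((k : ℝ) + 1))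
      (nhdsWithin 1 (Set.Ioo 0 1)) (nhds 1) := by
  have hc2 : ContinuousAt (fun d : ℝ => (2 : ℝ) ^ (1 - d)) 1 :=
    (Real.continuousAt_const_rpow (by norm_num)).comp (continuousAt_const.sub continuousAt_id)
  have hpos : ∀ d : ℝ, (0:ℝ) < (2:ℝ) ^ (1 - d) := fun d => Real.rpow_pos_of_pos (by norm_num) _
  have hlo : Tendsto (fun d : ℝ => d / 2 ^ (1 - d)) (nhdsWithin 1 (Set.Ioo 0 1)) (nhds 1) := by
    have hca : ContinuousAt (fun d : ℝ => d / 2 ^ (1 - d)) 1 :=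
      continuousAt_id.div hc2 (hpos 1).ne'
    have h' : Tendsto (fun d : ℝ => d / 2 ^ (1 - d)) (nhdsWithin 1 (Set.Ioo 0 1))
        (nhds ((1:ℝ) / 2 ^ ((1:ℝ) - 1))) := hca.tendsto.mono_left nhdsWithin_le_nhds
    have hval : (1:ℝ) / 2 ^ ((1:ℝ) - 1) = 1 := by
      rw [sub_self, Real.rpow_zero, div_one]
    rwa [hval] at h'
  have hhi : Tendsto (fun d : ℝ => (1 + d * (1 - d)) / 2 ^ (1 - d))
      (nhdsWithin 1 (Set.Ioo 0 1)) (nhds 1) := by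
    have hca : ContinuousAt (fun d : ℝ => (1 + d * (1 - d)) / 2 ^ (1 - d)) 1 :=
      (continuousAt_const.add (continuousAt_id.mul
        (continuousAt_const.sub continuousAt_id))).div hc2 (hpos 1).ne'
    have h' : Tendsto (fun d : ℝ => (1 + d * (1 - d)) / 2 ^ (1 - d)) (nhdsWithin 1 (Set.Ioo 0 1))
        (nhds ((1 + 1 * (1 - 1)) / 2 ^ ((1:ℝ) - 1))) := hca.tendsto.mono_left nhdsWithin_le_nhds
    have hval : ((1:ℝ) + 1 * (1 - 1)) / 2 ^ ((1:ℝ) - 1) = 1 := by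
      rw [sub_self, Real.rpow_zero, div_one]
      norm_num
    rwa [hval] at h'
  refine tendsto_of_tendsto_of_tendsto_of_le_of_le' hlo hhi ?_ ?_
  · filter_upwards [eventually_mem_nhdsWithin] with d hd
    obtain ⟨h1, _⟩ := key_bounds hd.1 hd.2
    rw [div_mul_eq_mul_div, div_le_div_iff_of_pos_right (hpos d)]
    linarith
  · filter_upwards [eventually_mem_nhdsWithin] with d hd
    obtain ⟨_, h2⟩ := key_bounds hd.1 hd.2
    rw [div_mul_eq_mul_div, div_le_div_iff_of_pos_right (hpos d)]
    linarith [h2]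
end

section
/- Let Γ = I \ ∪_{j=1}^∞ I_j be a monotone cut-out set with non-increasing gap lengths (l_j). Then Γ = {y_k : k ≥ 1} ∪ {y_1 + ∑_{j=1}^∞ l_j}, where y_1 = min I and y_{k+1} = y_k + l_k for k ≥ 1. In particular, Γ is countably infinite. -/
theorem monotone_cutout_characterization
    (l : ℕ → ℝ) (hpos : ∀ j, 0 < l j) (hmono : Antitone l) (hsum : Summable l)
    (u : ℝ) (y : ℕ → ℝ) (hy : ∀ k, y k = u + ∑ j ∈ Finset.range k, l j) :
    Set.Icc u (u + ∑' j, l j) \ (⋃ j, Set.Ioo (y j) (y (j + 1)))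
        = {x | ∃ k, x = y k} ∪ {u + ∑' j, l j} ∧
      (Set.Icc u (u + ∑' j, l j) \ (⋃ j, Set.Ioo (y j) (y (j + 1)))).Countable ∧
      (Set.Icc u (u + ∑' j, l j) \ (⋃ j, Set.Ioo (y j) (y (j + 1)))).Infinite := by
  set S := ∑' j, l j with hS
  have hymono : StrictMono y := by
    apply strictMono_nat_of_lt_succ
    intro n
    rw [hy n, hy (n + 1), Finset.sum_range_succ]
    linarith [hpos n]
  have hy0 : y 0 = u := by simp [hy 0]
  have hSnn : 0 ≤ S := tsum_nonneg fun j => (hpos j).le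
  have hyle : ∀ k, y k ≤ u + S := by
    intro k
    rw [hy k]
    have := Summable.sum_le_tsum (Finset.range k) (fun i _ => (hpos i).le) hsum
    linarith
  have htend : Filter.Tendsto y Filter.atTop (nhds (u + S)) := by
    have h1 : Filter.Tendsto (fun k => ∑ j ∈ Finset.range k, l j) Filter.atTop (nhds S) :=
      hsum.hasSum.tendsto_sum_nat
    have h2 := h1.const_add u
    convert h2 using 1
    funext k; exact hy k
  have hset : Set.Icc u (u + S) \ (⋃ j, Set.Ioo (y j) (y (j + 1)))
      = {x | ∃ k, x = y k} ∪ {u + S} := by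
    ext x
    constructor
    · rintro ⟨⟨hx1, hx2⟩, hx3⟩
      by_cases hxe : x = u + S
      · right; exact hxe
      left
      have hxlt : x < u + S := lt_of_le_of_ne hx2 hxe
      have hex : ∃ k, x < y k := by
        rcases (htend.eventually (eventually_gt_nhds hxlt)).exists with ⟨k, hk⟩
        exact ⟨k, hk⟩
      classical
      set K := Nat.find hex with hK
      have hKspec : x < y K := Nat.find_spec hex
      have hKpos : 0 < K := by
        rcases Nat.eq_zero_or_pos K with h | h
        · exfalso; rw [h, hy0] at hKspec; linarith
        · exact h
      obtain ⟨m, hm⟩ : ∃ m, K = m + 1 := ⟨K - 1, by omega⟩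
      have hmle : y m ≤ x := by
        have := Nat.find_min hex (by omega : m < K)
        linarith [not_lt.mp this]
      have hnot : x ∉ Set.Ioo (y m) (y (m + 1)) := by
        intro h
        exact hx3 (Set.mem_iUnion.mpr ⟨m, h⟩)
      have : ¬ y m < x := by
        intro h
        exact hnot ⟨h, by rw [← hm]; exact hKspec⟩
      exact ⟨m, le_antisymm (not_lt.mp this) hmle⟩
    · rintro (⟨k, rfl⟩ | hx)
      · refine ⟨⟨by rw [← hy0]; exact hymono.monotone (Nat.zero_le k), hyle k⟩, ?_⟩
        intro h
        rcases Set.mem_iUnion.mp h with ⟨j, hj1, hj2⟩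
        have h1 : j < k := hymono.lt_iff_lt.mp hj1
        have h2 : k < j + 1 := hymono.lt_iff_lt.mp hj2
        omega
      · rw [Set.mem_singleton_iff] at hx
        subst hx
        refine ⟨⟨by linarith, le_refl _⟩, ?_⟩
        intro h
        rcases Set.mem_iUnion.mp h with ⟨j, _, hj2⟩
        exact absurd hj2 (not_lt.mpr (hyle (j + 1)))
  have hrange : {x | ∃ k, x = y k} = Set.range y := by
    ext x; simp [eq_comm]
  refine ⟨hset, ?_, ?_⟩
  · rw [hset, hrange]
    exact (Set.countable_range y).union (Set.countable_singleton _)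
  · rw [hset]
    apply Set.Infinite.mono (Set.subset_union_left)
    rw [hrange]
    exact Set.infinite_range_of_injective hymono.injective
end
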